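/- Let S be a numerical semigroup with S ≠ ℕ. Then S⁽²⁾ (the complement of the complement of S) is a numerical semigroup if and only if S ∪ [B(S), ∞) has maximal embedding dimension. In particular, if S has maximal embedding dimension then S⁽²⁾ is a numerical semigroup. -/

import Mathlib

open Set

def IsNumericalSet (S : Set ℕ) : Prop := 0 ∈ S ∧ Sᶜ.Finite

def IsNumericalSemigroup (S : Set ℕ) : Prop :=
  IsNumericalSet S ∧ ∀ a ∈ S, ∀ b ∈ S, a + b ∈ S

/-- The associated set `A(S) = {s ∈ S : s + S ⊆ S}`. -/
def A (S : Set ℕ) : Set ℕ := {s ∈ S | ∀ t ∈ S, s + t ∈ S}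

/-- The Frobenius number: the largest gap of `S`. -/
noncomputable def F (S : Set ℕ) : ℕ := sSup Sᶜ

/-- The base: the largest element of `S` below `F S`. -/
noncomputable def B (S : Set ℕ) : ℕ := sSup {s | s ∈ S ∧ s < F S}

/-- The multiplicity: the smallest positive element of `S`. -/
noncomputable def m (S : Set ℕ) : ℕ := sInf {s | s ∈ S ∧ 0 < s}

/-- The complement numerical set (for `S ≠ ℕ`). -/
noncomputable def Stilde (S : Set ℕ) : Set ℕ :=
  {x | ∃ s ∈ S, s ≤ B S ∧ x = B S - s} ∪ {n | B S ≤ n}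

-- The complement operation, with the convention that the complement of ℕ is ℕ.
open Classical in
noncomputable def complOp (S : Set ℕ) : Set ℕ :=
  if S = Set.univ then Set.univ else Stilde S

/-- The genus: the number of gaps. -/
noncomputable def genus (S : Set ℕ) : ℕ := Sᶜ.ncard

/-- The number of boxes with hook length 1. -/
noncomputable def c1 (S : Set ℕ) : ℕ := {n | n ∈ S ∧ n + 1 ∉ S}.ncard

/-- An atom: a positive element not a sum of two positive elements. -/
def IsAtomOf (S : Set ℕ) (a : ℕ) : Prop :=
  a ∈ S ∧ 0 < a ∧ ¬ ∃ x ∈ S, ∃ y ∈ S, 0 < x ∧ 0 < y ∧ a = x + y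

/-- A small atom: an atom smaller than the Frobenius number. -/
def IsSmallAtom (S : Set ℕ) (a : ℕ) : Prop := IsAtomOf S a ∧ a < F S

/-- The embedding dimension: the number of atoms. -/
noncomputable def numAtoms (S : Set ℕ) : ℕ := {a | IsAtomOf S a}.ncard

/-- Maximal embedding dimension. -/
def MaxED (S : Set ℕ) : Prop := numAtoms S = m S


lemma maxED_iff_closed (T : Set ℕ) (hT : IsNumericalSemigroup T) :
    MaxED T ↔ ∀ s ∈ T, ∀ t ∈ T, 0 < s → 0 < t → s + t - m T ∈ T := by
  obtain ⟨⟨h0, hc⟩, hadd⟩ := hT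
  have hlarge : ∀ n : ℕ, sSup Tᶜ < n → n ∈ T := by
    intro n hn
    by_contra h
    exact absurd (le_csSup hc.bddAbove h) (not_le.mpr hn)
  have hPne : {s | s ∈ T ∧ 0 < s}.Nonempty :=
    ⟨sSup Tᶜ + 1, hlarge _ (Nat.lt_succ_self _), Nat.succ_pos _⟩
  have hμmem : m T ∈ T ∧ 0 < m T := Nat.sInf_mem hPne
  obtain ⟨hμT, hμpos⟩ := hμmem
  have hμle : ∀ s ∈ T, 0 < s → m T ≤ s := fun s hs hp => Nat.sInf_le ⟨hs, hp⟩
  set μ := m T with hμdef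
  have haddmul : ∀ t ∈ T, ∀ k : ℕ, t + μ * k ∈ T := by
    intro t ht k
    induction k with
    | zero => simpa using ht
    | succ n ih =>
      have h2 : t + μ * (n + 1) = t + μ * n + μ := by ring
      rw [h2]
      exact hadd _ ih _ hμT
  set Ap : Set ℕ := {t | t ∈ T ∧ ∀ t' ∈ T, t ≠ t' + μ} with hApdef
  set f : ℕ → ℕ := fun r => sInf {t | t ∈ T ∧ t % μ = r} with hfdef
  have hresne : ∀ r < μ, {t | t ∈ T ∧ t % μ = r}.Nonempty := by
    intro r hr
    refine ⟨r + μ * (sSup Tᶜ + 1), hlarge _ ?_, ?_⟩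
    · have : sSup Tᶜ + 1 ≤ μ * (sSup Tᶜ + 1) := Nat.le_mul_of_pos_left _ hμpos
      omega
    · simp [Nat.add_mul_mod_self_left, Nat.mod_eq_of_lt hr]
  have hf : ∀ r < μ, f r ∈ T ∧ f r % μ = r := fun r hr => Nat.sInf_mem (hresne r hr)
  have hApeq : Ap = f '' (Set.Iio μ) := by
    ext t
    constructor
    · rintro ⟨htT, hap⟩
      have hr : t % μ < μ := Nat.mod_lt _ hμpos
      refine ⟨t % μ, hr, ?_⟩
      have h1 : f (t % μ) ≤ t := Nat.sInf_le ⟨htT, rfl⟩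
      rcases Nat.lt_or_ge (f (t % μ)) t with hlt | hge
      · exfalso
        obtain ⟨hfT, hfm⟩ := hf _ hr
        set q1 := t / μ with hq1
        set q2 := f (t % μ) / μ with hq2
        have e1 : μ * q1 + t % μ = t := Nat.div_add_mod t μ
        have e2 : μ * q2 + t % μ = f (t % μ) := by
          conv_rhs => rw [← Nat.div_add_mod (f (t % μ)) μ]
          rw [hfm]
        have hq : q2 < q1 := by
          have : μ * q2 < μ * q1 := by omega
          exact Nat.lt_of_mul_lt_mul_left this
        set j := q1 - q2 - 1 with hj
        have hkey : μ * q1 = μ * q2 + μ * j + μ := by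
          have : q1 = q2 + j + 1 := by omega
          rw [this]; ring
        exact hap (f (t % μ) + μ * j) (haddmul _ hfT j) (by omega)
      · omega
    · rintro ⟨r, hr, rfl⟩
      obtain ⟨hfT, hfm⟩ := hf r hr
      refine ⟨hfT, ?_⟩
      intro t' ht' heq
      have h1 : t' % μ = r := by
        have : (t' + μ) % μ = t' % μ := Nat.add_mod_right _ _
        rw [← heq, hfm] at this
        omega
      have h2 : f r ≤ t' := Nat.sInf_le ⟨ht', h1⟩
      omega
  have hApfin : Ap.Finite := by
    rw [hApeq]; exact (Set.finite_Iio μ).image f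
  have hApcard : Ap.ncard = μ := by
    rw [hApeq]
    rw [Set.ncard_image_of_injOn]
    · rw [show Set.Iio μ = ↑(Finset.range μ) by ext x; simp]
      rw [Set.ncard_coe_finset, Finset.card_range]
    · intro r hr r' hr' heq
      have := (hf r hr).2
      have := (hf r' hr').2
      rw [heq] at *
      omega
  have h0Ap : 0 ∈ Ap := ⟨h0, fun t' _ h => by omega⟩
  have hμAp : μ ∉ Ap := fun h => h.2 0 h0 (by omega)
  set W : Set ℕ := insert μ (Ap \ {0}) with hWdef
  have hWfin : W.Finite := hApfin.diff.insert _
  have hWcard : W.ncard = μ := by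
    rw [hWdef, Set.ncard_insert_of_notMem (fun h => hμAp h.1) hApfin.diff]
    rw [Set.ncard_diff_singleton_of_mem h0Ap, hApcard]
    omega
  have hμatom : IsAtomOf T μ := by
    refine ⟨hμT, hμpos, ?_⟩
    rintro ⟨x, hx, y, hy, hxp, hyp, hxy⟩
    have := hμle x hx hxp
    have := hμle y hy hyp
    omega
  have hAtomsSub : {a | IsAtomOf T a} ⊆ W := by
    rintro a ⟨haT, hapos, hnot⟩
    by_cases ha : a = μ
    · exact Or.inl ha
    · refine Or.inr ⟨⟨haT, ?_⟩, by simp only [Set.mem_singleton_iff]; omega⟩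
      intro t' ht' heq
      have ht'pos : 0 < t' := by
        rcases Nat.eq_zero_or_pos t' with h | h
        · exact absurd (by omega : a = μ) ha
        · exact h
      exact hnot ⟨t', ht', μ, hμT, ht'pos, hμpos, heq⟩
  constructor
  · intro hmed s hs t ht hsp htp
    have heq : {a | IsAtomOf T a} = W :=
      Set.eq_of_subset_of_ncard_le hAtomsSub (by rw [hWcard]; exact hmed.ge) hWfin
    by_contra hnm
    have hstAp : s + t ∈ Ap := by
      refine ⟨hadd _ hs _ ht, ?_⟩
      intro t' ht' h
      exact hnm (by rw [show s + t - μ = t' by omega]; exact ht')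
    have hst0 : s + t ≠ 0 := by omega
    have : s + t ∈ W := Or.inr ⟨hstAp, hst0⟩
    rw [← heq] at this
    exact this.2.2 ⟨s, hs, t, ht, hsp, htp, rfl⟩
  · intro hcl
    have hWsub : W ⊆ {a | IsAtomOf T a} := by
      rintro w (rfl | ⟨⟨hwT, hap⟩, hw0⟩)
      · exact hμatom
      · have hwpos : 0 < w := by simp only [Set.mem_singleton_iff] at hw0; omega
        refine ⟨hwT, hwpos, ?_⟩
        rintro ⟨x, hx, y, hy, hxp, hyp, rfl⟩
        have h1 := hcl x hx y hy hxp hyp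
        have h2 := hμle x hx hxp
        exact hap _ h1 (by omega)
    have : {a | IsAtomOf T a} = W := Set.Subset.antisymm hAtomsSub hWsub
    show {a | IsAtomOf T a}.ncard = μ
    rw [this, hWcard]

lemma mem_Stilde (W : Set ℕ) (x : ℕ) :
    x ∈ Stilde W ↔ (∃ s, s ∈ W ∧ s ≤ B W ∧ x = B W - s) ∨ B W ≤ x := Iff.rfl

theorem double_complement_semigroup_iff_maxED (S : Set ℕ) (hS : IsNumericalSemigroup S)
    (hne : S ≠ Set.univ) :
    (IsNumericalSemigroup (complOp (complOp S)) ↔ MaxED (S ∪ {n | B S ≤ n})) ∧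
      (MaxED S → IsNumericalSemigroup (complOp (complOp S))) := by
  have h0S : 0 ∈ S := hS.1.1
  have hcS : Sᶜ.Finite := hS.1.2
  have haddS := hS.2
  have h1S : 1 ∉ S := by
    intro h1
    apply hne
    apply Set.eq_univ_of_forall
    intro n
    induction n with
    | zero => exact h0S
    | succ k ih => exact haddS k ih 1 h1
  have hcne : Sᶜ.Nonempty := Set.nonempty_compl.mpr hne
  have hFub : ∀ x, x ∉ S → x ≤ F S := fun x hx => le_csSup hcS.bddAbove hx
  have hF1 : 1 ≤ F S := hFub 1 h1S
  have hlargeS : ∀ n, F S < n → n ∈ S := by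
    intro n hn
    by_contra h
    exact absurd (hFub n h) (not_le.mpr hn)
  have hPne : {s | s ∈ S ∧ 0 < s}.Nonempty :=
    ⟨F S + 1, hlargeS _ (Nat.lt_succ_self _), Nat.succ_pos _⟩
  have hmmem : m S ∈ S ∧ 0 < m S := Nat.sInf_mem hPne
  obtain ⟨hmS, hmpos⟩ := hmmem
  have hmle : ∀ s ∈ S, 0 < s → m S ≤ s := fun s hs hp => Nat.sInf_le ⟨hs, hp⟩
  have hm2 : 2 ≤ m S := by
    rcases Nat.lt_or_ge (m S) 2 with h | h
    · exfalso
      have : m S = 1 := by omega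
      rw [this] at hmS
      exact h1S hmS
    · exact h
  have hQfin : {s | s ∈ S ∧ s < F S}.Finite :=
    (Set.finite_Iio (F S)).subset fun x hx => hx.2
  have hQne : {s | s ∈ S ∧ s < F S}.Nonempty := ⟨0, h0S, by omega⟩
  have hBmem : B S ∈ S ∧ B S < F S := hQne.csSup_mem hQfin
  obtain ⟨hBS, hBF⟩ := hBmem
  by_cases hB0 : B S = 0
  · -- degenerate case: Stilde S = univ
    have hSt : Stilde S = Set.univ :=
      Set.eq_univ_of_forall fun n => Or.inr (show B S ≤ n by omega)
    have hT : S ∪ {n | B S ≤ n} = Set.univ :=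
      Set.eq_univ_of_forall fun n => Or.inr (show B S ≤ n by omega)
    have hco : complOp (complOp S) = Set.univ := by
      unfold complOp
      rw [if_neg hne, hSt, if_pos rfl]
    have hunivsg : IsNumericalSemigroup Set.univ :=
      ⟨⟨trivial, by simp⟩, fun _ _ _ _ => trivial⟩
    have hunivmed : MaxED Set.univ :=
      (maxED_iff_closed _ hunivsg).mpr (fun _ _ _ _ _ _ => trivial)
    rw [hco, hT]
    exact ⟨⟨fun _ => hunivmed, fun _ => hunivsg⟩, fun _ => hunivsg⟩
  · -- main case
    have hmB : m S ≤ B S := hmle _ hBS (by omega)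
    have hB2 : 2 ≤ B S := by omega
    -- the Frobenius number of Stilde S
    have hB1V : B S - 1 ∉ Stilde S := by
      intro h
      rcases (mem_Stilde S _).mp h with ⟨s, hs, hsB, heq⟩ | hge
      · have hs1 : s = 1 := by omega
        rw [hs1] at hs
        exact h1S hs
      · omega
    have hVcne : (Stilde S)ᶜ.Nonempty := ⟨B S - 1, hB1V⟩
    have hVub : ∀ x ∈ (Stilde S)ᶜ, x ≤ B S - 1 := by
      intro x hx
      by_contra h
      exact hx ((mem_Stilde S x).mpr (Or.inr (by omega)))
    have hFV : F (Stilde S) = B S - 1 := by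
      unfold F
      exact le_antisymm (csSup_le hVcne hVub) (le_csSup ⟨B S - 1, hVub⟩ hB1V)
    have hQ'mem : B S - m S ∈ {x | x ∈ Stilde S ∧ x < F (Stilde S)} := by
      refine ⟨(mem_Stilde S _).mpr (Or.inl ⟨m S, hmS, hmB, rfl⟩), ?_⟩
      rw [hFV]; omega
    have hQ'ne : {x | x ∈ Stilde S ∧ x < F (Stilde S)}.Nonempty := ⟨_, hQ'mem⟩
    have hQ'ub : ∀ x ∈ {x | x ∈ Stilde S ∧ x < F (Stilde S)}, x ≤ B S - m S := by
      rintro x ⟨hxV, hxlt⟩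
      rw [hFV] at hxlt
      rcases (mem_Stilde S x).mp hxV with ⟨s, hs, hsB, rfl⟩ | hge
      · have hs2 : 2 ≤ s := by omega
        have := hmle s hs (by omega)
        omega
      · omega
    have hBV : B (Stilde S) = B S - m S := by
      unfold B
      exact le_antisymm (csSup_le hQ'ne hQ'ub) (le_csSup ⟨B S - m S, hQ'ub⟩ hQ'mem)
    -- Stilde S is not univ
    have hVne : Stilde S ≠ Set.univ := by
      intro h
      exact hB1V (h ▸ Set.mem_univ _)
    -- the double complement
    set U : Set ℕ := {x | x + m S ∈ S ∨ B S - m S ≤ x} with hUdef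
    have hmemU : ∀ x, x ∈ U ↔ (x + m S ∈ S ∨ B S - m S ≤ x) := fun x => Iff.rfl
    have hSt2 : Stilde (Stilde S) = U := by
      ext x
      rw [mem_Stilde, hmemU, hBV]
      constructor
      · rintro (⟨v, hv, hvle, rfl⟩ | hge)
        · rcases (mem_Stilde S v).mp hv with ⟨s, hs, hsB, rfl⟩ | hBv
          · left
            have hms : m S ≤ s := by omega
            have he : B S - m S - (B S - s) + m S = s := by omega
            rw [he]
            exact hs
          · exact absurd hBv (by omega)
        · exact Or.inr hge
      · rintro (hxm | hge)
        · by_cases hx : B S - m S ≤ x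
          · exact Or.inr hx
          · exact Or.inl ⟨B S - (x + m S),
              (mem_Stilde S _).mpr (Or.inl ⟨x + m S, hxm, by omega, rfl⟩), by omega, by omega⟩
        · exact Or.inr hge
    have hUeq : complOp (complOp S) = U := by
      unfold complOp
      rw [if_neg hne, if_neg hVne]
      exact hSt2
    -- the semigroup T = S ∪ [B, ∞)
    have hTadd : ∀ a ∈ S ∪ {n | B S ≤ n}, ∀ b ∈ S ∪ {n | B S ≤ n},
        a + b ∈ S ∪ {n | B S ≤ n} := by
      rintro a (ha | ha) b (hb | hb)
      · exact Or.inl (haddS a ha b hb)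
      · exact Or.inr (show B S ≤ a + b by have : B S ≤ b := hb; omega)
      · exact Or.inr (show B S ≤ a + b by have : B S ≤ a := ha; omega)
      · exact Or.inr (show B S ≤ a + b by have : B S ≤ a := ha; omega)
    have hTsg : IsNumericalSemigroup (S ∪ {n | B S ≤ n}) :=
      ⟨⟨Or.inl h0S, hcS.subset (compl_subset_compl.mpr Set.subset_union_left)⟩, hTadd⟩
    have hmlowT : ∀ u ∈ S ∪ {n | B S ≤ n}, 0 < u → m S ≤ u := by
      rintro u (hu | hu) hup
      · exact hmle u hu hup
      · have : B S ≤ u := hu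
        omega
    have hmT : m (S ∪ {n | B S ≤ n}) = m S := by
      have h1 : m (S ∪ {n | B S ≤ n}) ≤ m S := Nat.sInf_le ⟨Or.inl hmS, hmpos⟩
      have h2 : m (S ∪ {n | B S ≤ n}) ∈ S ∪ {n | B S ≤ n} ∧ 0 < m (S ∪ {n | B S ≤ n}) :=
        Nat.sInf_mem (⟨m S, Or.inl hmS, hmpos⟩ : {s | s ∈ S ∪ {n | B S ≤ n} ∧ 0 < s}.Nonempty)
      exact le_antisymm h1 (hmlowT _ h2.1 h2.2)
    -- the key equivalence
    have keyiff : IsNumericalSemigroup U ↔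
        (∀ s ∈ S ∪ {n | B S ≤ n}, ∀ t ∈ S ∪ {n | B S ≤ n}, 0 < s → 0 < t →
          s + t - m S ∈ S ∪ {n | B S ≤ n}) := by
      constructor
      · rintro ⟨_, hUadd⟩ s hs t ht hsp htp
        have hms := hmlowT s hs hsp
        have hmt := hmlowT t ht htp
        by_cases hge : B S ≤ s + t - m S
        · exact Or.inr hge
        · have hsSm : s ∈ S := by
            rcases hs with h | h
            · exact h
            · exact absurd (show B S ≤ s from h) (by omega)
          have htSm : t ∈ S := by
            rcases ht with h | h
            · exact h
            · exact absurd (show B S ≤ t from h) (by omega)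
          have hx : s - m S ∈ U := (hmemU _).mpr (Or.inl (by rw [show s - m S + m S = s by omega]; exact hsSm))
          have hy : t - m S ∈ U := (hmemU _).mpr (Or.inl (by rw [show t - m S + m S = t by omega]; exact htSm))
          rcases (hmemU _).mp (hUadd _ hx _ hy) with h | h
          · left
            rw [show s - m S + (t - m S) + m S = s + t - m S by omega] at h
            exact h
          · exact absurd h (by omega)
      · intro hClT
        refine ⟨⟨(hmemU 0).mpr (Or.inl (by rw [zero_add]; exact hmS)), ?_⟩, ?_⟩
        · apply (Set.finite_Iio (B S)).subset
          intro x hx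
          rw [Set.mem_compl_iff, hmemU] at hx
          push_neg at hx
          exact show x < B S by omega
        · intro a ha b hb
          rw [hmemU] at ha hb ⊢
          by_cases hge : B S - m S ≤ a + b
          · exact Or.inr hge
          · have haS : a + m S ∈ S := by
              rcases ha with h | h
              · exact h
              · exact absurd h (by omega)
            have hbS : b + m S ∈ S := by
              rcases hb with h | h
              · exact h
              · exact absurd h (by omega)
            have hcl := hClT (a + m S) (Or.inl haS) (b + m S) (Or.inl hbS) (by omega) (by omega)
            rw [show a + m S + (b + m S) - m S = a + b + m S by omega] at hcl
            rcases hcl with h | h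
            · exact Or.inl h
            · exact absurd (show B S ≤ a + b + m S from h) (by omega)
    have MedT : MaxED (S ∪ {n | B S ≤ n}) ↔
        (∀ s ∈ S ∪ {n | B S ≤ n}, ∀ t ∈ S ∪ {n | B S ≤ n}, 0 < s → 0 < t →
          s + t - m S ∈ S ∪ {n | B S ≤ n}) := by
      rw [maxED_iff_closed _ hTsg, hmT]
    constructor
    · rw [hUeq, MedT]
      exact keyiff
    · intro hmed
      rw [hUeq]
      apply keyiff.mpr
      have hClS := (maxED_iff_closed S hS).mp hmed
      intro s hs t ht hsp htp
      rcases hs with hsS | hsB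
      · rcases ht with htS | htB
        · exact Or.inl (hClS s hsS t htS hsp htp)
        · have h1 := hmle s hsS hsp
          have h2 : B S ≤ t := htB
          exact Or.inr (show B S ≤ s + t - m S by omega)
      · have h1 : B S ≤ s := hsB
        have h2 := hmlowT t ht htp
        exact Or.inr (show B S ≤ s + t - m S by omega)
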